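/- For every real T' > 0 and every integer N' ≥ 1, the infinite product defining P_{N',T'} converges locally uniformly on ℂ, so P_{N',T'} is an entire function, and it satisfies: P_{N',T'}(0) = 1; |P_{N',T'}(z)| ≤ 1 for every z ∈ ℂ with Im z ≥ 0; and |e^{−izT'/2} P_{N',T'}(z)| ≤ e^{|z| T'/2} for every z ∈ ℂ. -/

import Mathlib

open Complex Filter Finset Metric

set_option maxHeartbeats 1000000

/-- `C_{N',T'} = T' / (2 Σ_{k=N'}^∞ 1/k²)`. -/
noncomputable def CNT (N' : ℕ) (T' : ℝ) : ℝ :=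
  T' / (2 * ∑' j : ℕ, 1 / ((j + N' : ℕ) : ℝ) ^ 2)

/-- The mollifier `P_{N',T'}(z) = e^{izT'/2} ∏_{k=N'}^∞ cos (a_k z)` with
`a_k = C_{N',T'}/k²`. -/
noncomputable def PNT (N' : ℕ) (T' : ℝ) (z : ℂ) : ℂ :=
  Complex.exp (Complex.I * z * (T' / 2)) *
    ∏' j : ℕ, Complex.cos ((CNT N' T' / ((j + N' : ℕ) : ℝ) ^ 2 : ℝ) * z)

section Aux

/-- finite product bound: `‖∏ (1+u) - 1‖ ≤ exp (∑ ‖u‖) - 1`. -/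
lemma aux_prod_one_add_sub_one {β : Type*} (u : β → ℂ) (s : Finset β) :
    ‖(∏ j ∈ s, (1 + u j)) - 1‖ ≤ Real.exp (∑ j ∈ s, ‖u j‖) - 1 := by
  classical
  induction s using Finset.cons_induction with
  | empty => simp
  | cons a s ha ih =>
    rw [Finset.prod_cons, Finset.sum_cons]
    have h1 : (1 + u a) * ∏ j ∈ s, (1 + u j) - 1
        = (1 + u a) * ((∏ j ∈ s, (1 + u j)) - 1) + u a := by ring
    rw [h1]
    have h2 : ‖(1 + u a) * ((∏ j ∈ s, (1 + u j)) - 1) + u a‖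
        ≤ (1 + ‖u a‖) * (Real.exp (∑ j ∈ s, ‖u j‖) - 1) + ‖u a‖ := by
      refine (norm_add_le _ _).trans ?_
      rw [norm_mul]
      have h1a : ‖(1:ℂ) + u a‖ ≤ 1 + ‖u a‖ := (norm_add_le _ _).trans (by simp)
      have hnn : (0:ℝ) ≤ Real.exp (∑ j ∈ s, ‖u j‖) - 1 := by
        have := Real.one_le_exp (show (0:ℝ) ≤ ∑ j ∈ s, ‖u j‖ by positivity)
        linarith
      exact add_le_add (mul_le_mul h1a ih (norm_nonneg _) (by positivity)) le_rfl
    refine h2.trans ?_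
    have h3 : ‖u a‖ + 1 ≤ Real.exp ‖u a‖ := Real.add_one_le_exp _
    have h4 : (1:ℝ) ≤ Real.exp (∑ j ∈ s, ‖u j‖) := Real.one_le_exp (by positivity)
    have h5 : Real.exp (‖u a‖ + ∑ j ∈ s, ‖u j‖)
        = Real.exp ‖u a‖ * Real.exp (∑ j ∈ s, ‖u j‖) := Real.exp_add _ _
    nlinarith [norm_nonneg (u a)]

lemma aux_exp_sub_one (x : ℂ) : ‖Complex.exp x - 1‖ ≤ ‖x‖ * Real.exp ‖x‖ := by
  have key : ‖Complex.exp x - Complex.exp 0‖ ≤ Real.exp ‖x‖ * ‖x - 0‖ := by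
    refine Convex.norm_image_sub_le_of_norm_hasDerivWithin_le
      (f := Complex.exp) (f' := Complex.exp) (s := Metric.closedBall (0:ℂ) ‖x‖)
      (fun y _ => (Complex.hasDerivAt_exp y).hasDerivWithinAt) ?_
      (convex_closedBall _ _) ?_ ?_
    · intro y hy
      rw [Complex.norm_exp]
      have h1 : y.re ≤ ‖y‖ := (le_abs_self _).trans (Complex.abs_re_le_norm y)
      have h2 : ‖y‖ ≤ ‖x‖ := by
        have := mem_closedBall_zero_iff.1 hy
        exact this
      exact Real.exp_le_exp.2 (h1.trans h2)
    · exact mem_closedBall_self (norm_nonneg x)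
    · exact mem_closedBall_zero_iff.2 le_rfl
  simpa [Complex.exp_zero, mul_comm] using key

lemma aux_cos_sub_one (w : ℂ) : ‖Complex.cos w - 1‖ ≤ ‖w‖ * Real.exp ‖w‖ := by
  have hc : Complex.cos w - 1
      = ((Complex.exp (w * Complex.I) - 1) + (Complex.exp (-w * Complex.I) - 1)) / 2 := by
    rw [Complex.cos]; ring
  rw [hc]
  have h1 := aux_exp_sub_one (w * Complex.I)
  have h2 := aux_exp_sub_one (-w * Complex.I)
  have e1 : ‖w * Complex.I‖ = ‖w‖ := by simp
  have e2 : ‖-w * Complex.I‖ = ‖w‖ := by simp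
  rw [e1] at h1
  rw [e2] at h2
  calc ‖((Complex.exp (w * Complex.I) - 1) + (Complex.exp (-w * Complex.I) - 1)) / 2‖
      ≤ (‖Complex.exp (w * Complex.I) - 1‖ + ‖Complex.exp (-w * Complex.I) - 1‖) / 2 := by
        rw [norm_div]
        gcongr
        · exact norm_add_le _ _
        · simp
    _ ≤ (‖w‖ * Real.exp ‖w‖ + ‖w‖ * Real.exp ‖w‖) / 2 := by gcongr
    _ = ‖w‖ * Real.exp ‖w‖ := by ring

lemma aux_cos_le (w : ℂ) : ‖Complex.cos w‖ ≤ (Real.exp (-w.im) + Real.exp w.im) / 2 := by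
  rw [Complex.cos]
  have h1 : ‖Complex.exp (w * Complex.I)‖ = Real.exp (-w.im) := by
    rw [Complex.norm_exp]
    congr 1
    simp [Complex.mul_re]
  have h2 : ‖Complex.exp (-w * Complex.I)‖ = Real.exp w.im := by
    rw [Complex.norm_exp]
    congr 1
    simp [Complex.mul_re]
  calc ‖(Complex.exp (w * Complex.I) + Complex.exp (-w * Complex.I)) / 2‖
      ≤ (‖Complex.exp (w * Complex.I)‖ + ‖Complex.exp (-w * Complex.I)‖) / 2 := by
        rw [norm_div]
        gcongr
        · exact norm_add_le _ _
        · simp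
    _ = (Real.exp (-w.im) + Real.exp w.im) / 2 := by rw [h1, h2]

lemma aux_cos_le_exp_norm (w : ℂ) : ‖Complex.cos w‖ ≤ Real.exp ‖w‖ := by
  refine (aux_cos_le w).trans ?_
  have h1 : Real.exp (-w.im) ≤ Real.exp ‖w‖ := by
    refine Real.exp_le_exp.2 ?_
    have := Complex.abs_im_le_norm w
    cases abs_cases w.im <;> linarith
  have h2 : Real.exp w.im ≤ Real.exp ‖w‖ := by
    refine Real.exp_le_exp.2 ?_
    have := Complex.abs_im_le_norm w
    cases abs_cases w.im <;> linarith
  linarith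

/-- A product `∏ (1+u)` with `∑ ‖u‖ < ∞` is multipliable. -/
lemma aux_multipliable_one_add (u : ℕ → ℂ) (hu : Summable fun j => ‖u j‖) :
    Multipliable fun j => 1 + u j := by
  classical
  set A : ℝ := ∑' j, ‖u j‖ with hA
  have hA0 : 0 ≤ A := tsum_nonneg fun j => norm_nonneg _
  have hcauchy : CauchySeq fun s : Finset ℕ => ∏ b ∈ s, (1 + u b) := by
    rw [Metric.cauchySeq_iff']
    intro ε hε
    have hδpos : (0:ℝ) < Real.log (1 + ε / Real.exp A) := by
      refine Real.log_pos ?_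
      have : 0 < ε / Real.exp A := div_pos hε (Real.exp_pos _)
      linarith
    obtain ⟨s₀, hs₀⟩ := hu.vanishing (e := Set.Iio (Real.log (1 + ε / Real.exp A)))
      (Iio_mem_nhds hδpos)
    refine ⟨s₀, fun s hs => ?_⟩
    have hsplit : ∏ b ∈ s, (1 + u b)
        = (∏ b ∈ s₀, (1 + u b)) * ∏ b ∈ s \ s₀, (1 + u b) := by
      rw [← Finset.prod_union Finset.disjoint_sdiff]
      congr 1
      exact (Finset.union_sdiff_of_subset hs).symm
    rw [dist_eq_norm, hsplit]
    have key : (∏ b ∈ s₀, (1 + u b)) * ∏ b ∈ s \ s₀, (1 + u b) - ∏ b ∈ s₀, (1 + u b)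
        = (∏ b ∈ s₀, (1 + u b)) * ((∏ b ∈ s \ s₀, (1 + u b)) - 1) := by ring
    rw [key, norm_mul]
    have hb1 : ‖∏ b ∈ s₀, (1 + u b)‖ ≤ Real.exp A := by
      rw [norm_prod]
      calc ∏ b ∈ s₀, ‖1 + u b‖ ≤ ∏ b ∈ s₀, Real.exp ‖u b‖ := by
            refine Finset.prod_le_prod (fun i _ => norm_nonneg _) fun i _ => ?_
            refine (norm_add_le _ _).trans ?_
            have := Real.add_one_le_exp ‖u i‖
            simp only [norm_one]
            linarith
        _ = Real.exp (∑ b ∈ s₀, ‖u b‖) := (Real.exp_sum _ _).symm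
        _ ≤ Real.exp A := Real.exp_le_exp.2 (Summable.sum_le_tsum _ (fun i _ => norm_nonneg _) hu)
    have hsum_small : ∑ b ∈ s \ s₀, ‖u b‖ < Real.log (1 + ε / Real.exp A) :=
      hs₀ _ Finset.sdiff_disjoint
    have hb2 : ‖(∏ b ∈ s \ s₀, (1 + u b)) - 1‖ < ε / Real.exp A := by
      refine (aux_prod_one_add_sub_one u _).trans_lt ?_
      have : Real.exp (∑ b ∈ s \ s₀, ‖u b‖) < 1 + ε / Real.exp A := by
        calc Real.exp (∑ b ∈ s \ s₀, ‖u b‖)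
            < Real.exp (Real.log (1 + ε / Real.exp A)) := Real.exp_lt_exp.2 hsum_small
          _ = 1 + ε / Real.exp A := Real.exp_log (by positivity)
      linarith
    calc ‖∏ b ∈ s₀, (1 + u b)‖ * ‖(∏ b ∈ s \ s₀, (1 + u b)) - 1‖
        ≤ Real.exp A * ‖(∏ b ∈ s \ s₀, (1 + u b)) - 1‖ := by
          gcongr
      _ < Real.exp A * (ε / Real.exp A) := by
          refine (mul_lt_mul_iff_right₀ (Real.exp_pos _)).2 hb2
      _ = ε := by field_simp
  obtain ⟨x, hx⟩ := cauchySeq_tendsto_of_complete hcauchy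
  exact ⟨x, hx⟩

/-- bound on `‖∏' (1+u) - 1‖`. -/
lemma aux_tprod_one_add_sub_one (u : ℕ → ℂ) (hu : Summable fun j => ‖u j‖) :
    ‖(∏' j, (1 + u j)) - 1‖ ≤ Real.exp (∑' j, ‖u j‖) - 1 := by
  have hm := aux_multipliable_one_add u hu
  have htend := hm.hasProd
  have h2 : Filter.Tendsto (fun s : Finset ℕ => ‖(∏ b ∈ s, (1 + u b)) - 1‖) Filter.atTop
      (nhds ‖(∏' j, (1 + u j)) - 1‖) :=
    ((continuous_norm.comp (continuous_id.sub continuous_const)).continuousAt.tendsto.comp htend)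
  refine le_of_tendsto h2 (Filter.Eventually.of_forall fun s => ?_)
  refine (aux_prod_one_add_sub_one u s).trans ?_
  have : ∑ j ∈ s, ‖u j‖ ≤ ∑' j, ‖u j‖ := Summable.sum_le_tsum _ (fun i _ => norm_nonneg _) hu
  have := Real.exp_le_exp.2 this
  linarith

/-- norm bound of a tprod by exp of a sum. -/
lemma aux_norm_tprod_le (f : ℕ → ℂ) (b : ℕ → ℝ) (hf : Multipliable f) (hb : Summable b)
    (hb0 : ∀ j, 0 ≤ b j) (h : ∀ j, ‖f j‖ ≤ Real.exp (b j)) :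
    ‖∏' j, f j‖ ≤ Real.exp (∑' j, b j) := by
  have htend := hf.hasProd.norm
  refine le_of_tendsto htend (Filter.Eventually.of_forall fun s => ?_)
  calc ∏ j ∈ s, ‖f j‖ ≤ ∏ j ∈ s, Real.exp (b j) :=
        Finset.prod_le_prod (fun i _ => norm_nonneg _) (fun i _ => h i)
    _ = Real.exp (∑ j ∈ s, b j) := (Real.exp_sum _ _).symm
    _ ≤ Real.exp (∑' j, b j) := Real.exp_le_exp.2 (Summable.sum_le_tsum _ (fun i _ => hb0 i) hb)

end Aux

section Main

/-- `a_j = C/(j+N')²`. -/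
noncomputable def aN (N' : ℕ) (T' : ℝ) (j : ℕ) : ℝ := CNT N' T' / ((j + N' : ℕ) : ℝ) ^ 2

lemma hterm_pos (N' : ℕ) (hN' : 1 ≤ N') (j : ℕ) : 0 < 1 / ((j + N' : ℕ) : ℝ) ^ 2 := by
  have h : 0 < j + N' := by omega
  have h2 : (0:ℝ) < ((j + N' : ℕ) : ℝ) := by exact_mod_cast h
  positivity

lemma hS_summ (N' : ℕ) : Summable (fun j : ℕ => 1 / ((j + N' : ℕ) : ℝ) ^ 2) :=
  (summable_nat_add_iff (f := fun n : ℕ => 1 / (n : ℝ) ^ 2) N').2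
    (Real.summable_one_div_nat_pow.2 one_lt_two)

lemma hS_pos (N' : ℕ) (hN' : 1 ≤ N') : 0 < ∑' j : ℕ, 1 / ((j + N' : ℕ) : ℝ) ^ 2 :=
  Summable.tsum_pos (hS_summ N') (fun j => (hterm_pos N' hN' j).le) 0 (hterm_pos N' hN' 0)

lemma hC_pos (N' : ℕ) (T' : ℝ) (hT' : 0 < T') (hN' : 1 ≤ N') : 0 < CNT N' T' :=
  div_pos hT' (mul_pos two_pos (hS_pos N' hN'))

lemma ha_pos (N' : ℕ) (T' : ℝ) (hT' : 0 < T') (hN' : 1 ≤ N') (j : ℕ) : 0 < aN N' T' j := by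
  have h : 0 < j + N' := by omega
  have h2 : (0:ℝ) < ((j + N' : ℕ) : ℝ) := by exact_mod_cast h
  exact div_pos (hC_pos N' T' hT' hN') (by positivity)

lemma ha_le (N' : ℕ) (T' : ℝ) (hT' : 0 < T') (hN' : 1 ≤ N') (j : ℕ) :
    aN N' T' j ≤ CNT N' T' := by
  refine div_le_self (hC_pos N' T' hT' hN').le ?_
  have h : (1:ℝ) ≤ ((j + N' : ℕ) : ℝ) := by exact_mod_cast (by omega : 1 ≤ j + N')
  nlinarith

lemma ha_summ (N' : ℕ) (T' : ℝ) : Summable (aN N' T') := by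
  refine Summable.congr ((hS_summ N').mul_left (CNT N' T')) fun j => ?_
  rw [aN, mul_one_div]

lemma ha_tsum (N' : ℕ) (T' : ℝ) (hT' : 0 < T') (hN' : 1 ≤ N') :
    ∑' j, aN N' T' j = T' / 2 := by
  have hSpos := hS_pos N' hN'
  set S : ℝ := ∑' j : ℕ, 1 / ((j + N' : ℕ) : ℝ) ^ 2 with hSdef
  have h1 : ∑' j, aN N' T' j = CNT N' T' * S := by
    rw [hSdef, ← tsum_mul_left]
    exact tsum_congr fun j => by rw [aN, mul_one_div]
  have hCNT : CNT N' T' = T' / (2 * S) := by rw [CNT, ← hSdef]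
  rw [h1, hCNT]
  have hne : S ≠ 0 := ne_of_gt hSpos
  field_simp

end Main

section Bounds

variable (N' : ℕ) (T' : ℝ)

lemma hnorm_az (hT' : 0 < T') (hN' : 1 ≤ N') (j : ℕ) (z : ℂ) :
    ‖((aN N' T' j : ℝ) : ℂ) * z‖ = aN N' T' j * ‖z‖ := by
  rw [norm_mul, Complex.norm_real, Real.norm_eq_abs, _root_.abs_of_nonneg (ha_pos N' T' hT' hN' j).le]

lemma hu_bound (hT' : 0 < T') (hN' : 1 ≤ N') (z : ℂ) (R : ℝ) (hz : ‖z‖ ≤ R) (j : ℕ) :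
    ‖Complex.cos (((aN N' T' j : ℝ) : ℂ) * z) - 1‖
      ≤ aN N' T' j * (R * Real.exp (CNT N' T' * R)) := by
  have hC := hC_pos N' T' hT' hN'
  have ha := ha_pos N' T' hT' hN' j
  have hale := ha_le N' T' hT' hN' j
  have hR0 : 0 ≤ R := le_trans (norm_nonneg z) hz
  refine (aux_cos_sub_one _).trans ?_
  rw [hnorm_az N' T' hT' hN' j z]
  have step : aN N' T' j * ‖z‖ * Real.exp (aN N' T' j * ‖z‖)
      ≤ aN N' T' j * R * Real.exp (CNT N' T' * R) := by
    have hexp : Real.exp (aN N' T' j * ‖z‖) ≤ Real.exp (CNT N' T' * R) :=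
      Real.exp_le_exp.2 (mul_le_mul hale hz (norm_nonneg z) hC.le)
    have hmul : aN N' T' j * ‖z‖ ≤ aN N' T' j * R := mul_le_mul_of_nonneg_left hz ha.le
    exact mul_le_mul hmul hexp (Real.exp_pos _).le (by positivity)
  calc aN N' T' j * ‖z‖ * Real.exp (aN N' T' j * ‖z‖)
      ≤ aN N' T' j * R * Real.exp (CNT N' T' * R) := step
    _ = aN N' T' j * (R * Real.exp (CNT N' T' * R)) := by ring

lemma hu_summ (hT' : 0 < T') (hN' : 1 ≤ N') (z : ℂ) :
    Summable fun j => ‖Complex.cos (((aN N' T' j : ℝ) : ℂ) * z) - 1‖ := by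
  refine Summable.of_nonneg_of_le (fun j => norm_nonneg _)
    (hu_bound N' T' hT' hN' z ‖z‖ le_rfl) ?_
  exact (ha_summ N' T').mul_right _

lemma hmult (hT' : 0 < T') (hN' : 1 ≤ N') (z : ℂ) :
    Multipliable fun j => Complex.cos (((aN N' T' j : ℝ) : ℂ) * z) := by
  have := aux_multipliable_one_add
    (fun j => Complex.cos (((aN N' T' j : ℝ) : ℂ) * z) - 1) (hu_summ N' T' hT' hN' z)
  refine this.congr fun j => ?_
  ring

end Bounds

section Uniform

variable (N' : ℕ) (T' : ℝ)

lemma aux_prod_mul_tprod_nat_add (f : ℕ → ℂ) (K : ℕ) (hf : Multipliable f)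
    (htail : Multipliable fun i => f (i + K)) :
    (∏ j ∈ Finset.range K, f j) * (∏' i, f (i + K)) = ∏' j, f j := by
  have h1 : HasProd (f ∘ (↑) : (↑(Finset.range K) : Set ℕ) → ℂ)
      (∏ j ∈ Finset.range K, f j) := (Finset.range K).hasProd f
  have h2 : HasProd (f ∘ (↑) : ((↑(Finset.range K) : Set ℕ)ᶜ : Set ℕ) → ℂ)
      (∏' i, f (i + K)) := by
    refine ((notMemRangeEquiv K).symm.hasProd_iff (f := (f ∘ (↑) : ((↑(Finset.range K) : Set ℕ)ᶜ : Set ℕ) → ℂ))).1 ?_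
    have heq : ((f ∘ (↑) : ((↑(Finset.range K) : Set ℕ)ᶜ : Set ℕ) → ℂ)
        ∘ (notMemRangeEquiv K).symm) = fun i => f (i + K) := by
      funext i
      simp [coe_notMemRangeEquiv_symm, Function.comp]
    rw [heq]
    exact htail.hasProd
  exact (h1.mul_compl h2).tprod_eq.symm

lemma huniform (hT' : 0 < T') (hN' : 1 ≤ N') (R : ℝ) (hR : 0 ≤ R) :
    TendstoUniformlyOn
      (fun (K : ℕ) (z : ℂ) => ∏ j ∈ Finset.range K, Complex.cos (((aN N' T' j : ℝ) : ℂ) * z))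
      (fun z => ∏' j, Complex.cos (((aN N' T' j : ℝ) : ℂ) * z)) Filter.atTop
      (Metric.closedBall 0 R) := by
  classical
  set m : ℕ → ℝ := fun j => aN N' T' j * (R * Real.exp (CNT N' T' * R)) with hm
  have hm_summ : Summable m := (ha_summ N' T').mul_right _
  have hm0 : ∀ j, 0 ≤ m j := fun j =>
    mul_nonneg (ha_pos N' T' hT' hN' j).le (by positivity)
  set t : ℕ → ℝ := fun K => ∑' j, m (j + K) with ht
  have htt : Filter.Tendsto t Filter.atTop (nhds 0) := tendsto_sum_nat_add m
  have hcont : Filter.Tendsto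
      (fun K => Real.exp (∑' j, m j) * (Real.exp (t K) - 1)) Filter.atTop (nhds 0) := by
    have h1 : Filter.Tendsto (fun K => Real.exp (t K) - 1) Filter.atTop (nhds 0) := by
      have := (Real.continuous_exp.continuousAt (x := (0:ℝ))).tendsto.comp htt
      have h2 := this.sub_const 1
      simpa using h2
    have := h1.const_mul (Real.exp (∑' j, m j))
    simpa using this
  rw [Metric.tendstoUniformlyOn_iff]
  intro ε hε
  filter_upwards [hcont.eventually (gt_mem_nhds hε)] with K hK z hz
  have hzR : ‖z‖ ≤ R := mem_closedBall_zero_iff.1 hz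
  have hmz := hmult N' T' hT' hN' z
  have htail_mult : Multipliable fun i : ℕ => Complex.cos (((aN N' T' (i + K) : ℝ) : ℂ) * z) := by
    have := aux_multipliable_one_add
      (fun i => Complex.cos (((aN N' T' (i + K) : ℝ) : ℂ) * z) - 1)
      ((summable_nat_add_iff (f := fun j : ℕ =>
        ‖Complex.cos (((aN N' T' j : ℝ) : ℂ) * z) - 1‖) K).2 (hu_summ N' T' hT' hN' z))
    exact this.congr fun i => by ring
  have hdecomp := aux_prod_mul_tprod_nat_add
    (fun j => Complex.cos (((aN N' T' j : ℝ) : ℂ) * z)) K hmz htail_mult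
  rw [dist_eq_norm]
  set F : ℂ := ∏ j ∈ Finset.range K, Complex.cos (((aN N' T' j : ℝ) : ℂ) * z) with hF
  set Q : ℂ := ∏' i : ℕ, Complex.cos (((aN N' T' (i + K) : ℝ) : ℂ) * z) with hQ
  have hsplit : (∏' j, Complex.cos (((aN N' T' j : ℝ) : ℂ) * z)) - F = F * (Q - 1) := by
    rw [← hdecomp]; ring
  rw [hsplit, norm_mul]
  have hucos : ∀ j, ‖Complex.cos (((aN N' T' j : ℝ) : ℂ) * z)‖ ≤ Real.exp (m j) := by
    intro j
    have h1 : ‖Complex.cos (((aN N' T' j : ℝ) : ℂ) * z)‖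
        ≤ 1 + ‖Complex.cos (((aN N' T' j : ℝ) : ℂ) * z) - 1‖ := by
      have := norm_add_le (Complex.cos (((aN N' T' j : ℝ) : ℂ) * z) - 1) 1
      simpa [add_comm] using this
    have h2 := hu_bound N' T' hT' hN' z R hzR j
    have h3 := Real.add_one_le_exp (m j)
    have hmj : m j = aN N' T' j * (R * Real.exp (CNT N' T' * R)) := rfl
    linarith
  have hFbound : ‖F‖ ≤ Real.exp (∑' j, m j) := by
    rw [hF, norm_prod]
    calc ∏ j ∈ Finset.range K, ‖Complex.cos (((aN N' T' j : ℝ) : ℂ) * z)‖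
        ≤ ∏ j ∈ Finset.range K, Real.exp (m j) :=
          Finset.prod_le_prod (fun i _ => norm_nonneg _) fun i _ => hucos i
      _ = Real.exp (∑ j ∈ Finset.range K, m j) := (Real.exp_sum _ _).symm
      _ ≤ Real.exp (∑' j, m j) :=
          Real.exp_le_exp.2 (Summable.sum_le_tsum _ (fun i _ => hm0 i) hm_summ)
  have hQbound : ‖Q - 1‖ ≤ Real.exp (t K) - 1 := by
    have husum : Summable fun i : ℕ =>
        ‖Complex.cos (((aN N' T' (i + K) : ℝ) : ℂ) * z) - 1‖ :=
      (summable_nat_add_iff (f := fun j : ℕ =>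
        ‖Complex.cos (((aN N' T' j : ℝ) : ℂ) * z) - 1‖) K).2 (hu_summ N' T' hT' hN' z)
    have h1 := aux_tprod_one_add_sub_one
      (fun i => Complex.cos (((aN N' T' (i + K) : ℝ) : ℂ) * z) - 1) husum
    have h2 : (∏' i : ℕ, (1 + (Complex.cos (((aN N' T' (i + K) : ℝ) : ℂ) * z) - 1))) = Q := by
      rw [hQ]
      exact tprod_congr fun i => by ring
    rw [h2] at h1
    refine h1.trans ?_
    have h3 : ∑' i : ℕ, ‖Complex.cos (((aN N' T' (i + K) : ℝ) : ℂ) * z) - 1‖ ≤ t K := by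
      rw [ht]
      exact Summable.tsum_le_tsum (fun i => hu_bound N' T' hT' hN' z R hzR (i + K)) husum
        ((summable_nat_add_iff (f := m) K).2 hm_summ)
    have := Real.exp_le_exp.2 h3
    linarith
  calc ‖F‖ * ‖Q - 1‖ ≤ Real.exp (∑' j, m j) * (Real.exp (t K) - 1) := by
        refine mul_le_mul hFbound hQbound (norm_nonneg _) (Real.exp_pos _).le
    _ < ε := hK

lemma aux_tendstoUniformlyOn_mul {F : ℕ → ℂ → ℂ} {g h : ℂ → ℂ} {s : Set ℂ} {B : ℝ}
    (hB : 0 < B) (hbd : ∀ z ∈ s, ‖h z‖ ≤ B)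
    (hFg : TendstoUniformlyOn F g Filter.atTop s) :
    TendstoUniformlyOn (fun K z => h z * F K z) (fun z => h z * g z) Filter.atTop s := by
  rw [Metric.tendstoUniformlyOn_iff] at hFg ⊢
  intro ε hε
  filter_upwards [hFg (ε / B) (div_pos hε hB)] with K hK z hz
  have hd := hK z hz
  rw [dist_eq_norm] at hd ⊢
  rw [← mul_sub, norm_mul]
  calc ‖h z‖ * ‖g z - F K z‖ ≤ B * ‖g z - F K z‖ :=
        mul_le_mul_of_nonneg_right (hbd z hz) (norm_nonneg _)
    _ < ε := (lt_div_iff₀' hB).1 hd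

end Uniform

lemma hre_aux (T' : ℝ) (z : ℂ) : (Complex.I * z * ((T' : ℂ) / 2)).re = -z.im * (T' / 2) := by
  have h2 : ((T' : ℂ) / 2) = ((T' / 2 : ℝ) : ℂ) := by push_cast; ring
  rw [h2]
  simp [Complex.mul_re, Complex.mul_im]

lemma hcos_d (a : ℝ) (ha : 0 ≤ a) (z : ℂ) (hz : 0 ≤ z.im) :
    ‖Complex.cos ((a : ℂ) * z)‖ ≤ Real.exp (a * z.im) := by
  refine (aux_cos_le _).trans ?_
  have him : ((a : ℂ) * z).im = a * z.im := by simp [Complex.mul_im]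
  rw [him]
  have h0 : 0 ≤ a * z.im := mul_nonneg ha hz
  have h1 : Real.exp (-(a * z.im)) ≤ Real.exp (a * z.im) :=
    Real.exp_le_exp.2 (neg_le_self h0)
  linarith

theorem mollifier_basic_properties (T' : ℝ) (hT' : 0 < T') (N' : ℕ) (hN' : 1 ≤ N') :
    TendstoLocallyUniformly
      (fun (K : ℕ) (z : ℂ) =>
        Complex.exp (Complex.I * z * (T' / 2)) *
          ∏ j ∈ Finset.range K,
            Complex.cos ((CNT N' T' / ((j + N' : ℕ) : ℝ) ^ 2 : ℝ) * z))
      (PNT N' T') Filter.atTop ∧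
    Differentiable ℂ (PNT N' T') ∧
    PNT N' T' 0 = 1 ∧
    (∀ z : ℂ, 0 ≤ z.im → ‖PNT N' T' z‖ ≤ 1) ∧
    (∀ z : ℂ, ‖Complex.exp (-Complex.I * z * (T' / 2)) * PNT N' T' z‖ ≤
      Real.exp (‖z‖ * (T' / 2))) := by
  have hPNT : ∀ z : ℂ, PNT N' T' z = Complex.exp (Complex.I * z * ((T' : ℂ) / 2)) *
      ∏' j : ℕ, Complex.cos (((aN N' T' j : ℝ) : ℂ) * z) := fun z => rfl
  have hTLU : TendstoLocallyUniformly
      (fun (K : ℕ) (z : ℂ) => Complex.exp (Complex.I * z * ((T' : ℂ) / 2)) *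
        ∏ j ∈ Finset.range K, Complex.cos (((aN N' T' j : ℝ) : ℂ) * z))
      (fun z => Complex.exp (Complex.I * z * ((T' : ℂ) / 2)) *
        ∏' j : ℕ, Complex.cos (((aN N' T' j : ℝ) : ℂ) * z)) Filter.atTop := by
    rw [tendstoLocallyUniformly_iff_forall_isCompact]
    intro s hs
    obtain ⟨R, hRs⟩ := hs.isBounded.subset_closedBall 0
    have hsub : s ⊆ Metric.closedBall 0 (max R 0) :=
      hRs.trans (Metric.closedBall_subset_closedBall (le_max_left _ _))
    refine TendstoUniformlyOn.mono ?_ hsub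
    refine aux_tendstoUniformlyOn_mul (B := Real.exp (max R 0 * (T' / 2)))
      (Real.exp_pos _) ?_ (huniform N' T' hT' hN' (max R 0) (le_max_right _ _))
    intro z hz
    rw [Complex.norm_exp, hre_aux T' z]
    refine Real.exp_le_exp.2 ?_
    have him : |z.im| ≤ max R 0 := by
      refine (Complex.abs_im_le_norm z).trans ?_
      exact mem_closedBall_zero_iff.1 hz
    have h1 : -z.im ≤ max R 0 := by cases abs_cases z.im <;> linarith
    nlinarith
  refine ⟨hTLU, ?_, ?_, ?_, ?_⟩
  · have hdiff : ∀ K : ℕ, Differentiable ℂ (fun z : ℂ =>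
        Complex.exp (Complex.I * z * ((T' : ℂ) / 2)) *
          ∏ j ∈ Finset.range K, Complex.cos (((aN N' T' j : ℝ) : ℂ) * z)) := by
      intro K
      refine Differentiable.mul ?_ ?_
      · exact Complex.differentiable_exp.comp
          ((differentiable_id.const_mul Complex.I).mul_const _)
      · exact Differentiable.fun_finsetProd fun j _ =>
          Complex.differentiable_cos.comp (differentiable_id.const_mul _)
    have hd := (tendstoLocallyUniformlyOn_univ.2 hTLU).differentiableOn
      (Filter.Eventually.of_forall fun K => (hdiff K).differentiableOn) isOpen_univ
    have : Differentiable ℂ (fun z => Complex.exp (Complex.I * z * ((T' : ℂ) / 2)) *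
        ∏' j : ℕ, Complex.cos (((aN N' T' j : ℝ) : ℂ) * z)) := differentiableOn_univ.1 hd
    exact this
  · simp [PNT]
  · intro z hz
    rw [hPNT z, norm_mul, Complex.norm_exp, hre_aux T' z]
    have h2 : ‖∏' j : ℕ, Complex.cos (((aN N' T' j : ℝ) : ℂ) * z)‖
        ≤ Real.exp (z.im * (T' / 2)) := by
      have := aux_norm_tprod_le (fun j => Complex.cos (((aN N' T' j : ℝ) : ℂ) * z))
        (fun j => aN N' T' j * z.im) (hmult N' T' hT' hN' z)
        ((ha_summ N' T').mul_right _)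
        (fun j => mul_nonneg (ha_pos N' T' hT' hN' j).le hz)
        (fun j => hcos_d (aN N' T' j) (ha_pos N' T' hT' hN' j).le z hz)
      refine this.trans ?_
      rw [tsum_mul_right, ha_tsum N' T' hT' hN']
      exact Real.exp_le_exp.2 (le_of_eq (by ring))
    calc Real.exp (-z.im * (T' / 2)) * ‖∏' j : ℕ, Complex.cos (((aN N' T' j : ℝ) : ℂ) * z)‖
        ≤ Real.exp (-z.im * (T' / 2)) * Real.exp (z.im * (T' / 2)) := by
          exact mul_le_mul_of_nonneg_left h2 (Real.exp_pos _).le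
      _ = 1 := by rw [← Real.exp_add]; ring_nf; exact Real.exp_zero
  · intro z
    have key : Complex.exp (-Complex.I * z * ((T' : ℂ) / 2)) * PNT N' T' z
        = ∏' j : ℕ, Complex.cos (((aN N' T' j : ℝ) : ℂ) * z) := by
      rw [hPNT z, ← mul_assoc, ← Complex.exp_add]
      have h0 : -Complex.I * z * ((T' : ℂ) / 2) + Complex.I * z * ((T' : ℂ) / 2) = 0 := by ring
      rw [h0, Complex.exp_zero, one_mul]
    rw [key]
    have := aux_norm_tprod_le (fun j => Complex.cos (((aN N' T' j : ℝ) : ℂ) * z))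
      (fun j => aN N' T' j * ‖z‖) (hmult N' T' hT' hN' z)
      ((ha_summ N' T').mul_right _)
      (fun j => mul_nonneg (ha_pos N' T' hT' hN' j).le (norm_nonneg z))
      (fun j => ?_)
    · refine this.trans ?_
      rw [tsum_mul_right, ha_tsum N' T' hT' hN']
      exact Real.exp_le_exp.2 (le_of_eq (by ring))
    · refine (aux_cos_le_exp_norm _).trans ?_
      rw [hnorm_az N' T' hT' hN' j z]
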